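/- For the semiflow S on Z = [0,1] × [0,∞) defined by S(t;(x₀,y₀)) = (x₀, max(y₀ − x₀t, 0)) for x₀ > 0 and S(t;(0,y₀)) = (0, max(y₀ − t, 0)), the map S(t;·) : Z → Z fails to have closed graph for every t > 0: taking z_n = (1/n, y₀) with y₀ > 0, one has z_n → (0,y₀) and S(t;z_n) → (0,y₀), but S(t;(0,y₀)) = (0, max(y₀−t,0)) ≠ (0,y₀). -/
import Mathlib


open Filter Metric Set Topology Bornology

/-- The phase space `Z = [0,1] × [0,∞)`. -/
def Zset : Set (ℝ × ℝ) := Icc (0 : ℝ) 1 ×ˢ Ici (0 : ℝ)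

/-- The semiflow: the first coordinate is constant; the second decreases with
speed `x₀` when `x₀ > 0` and speed `1` when `x₀ = 0`, stopped at `0`. -/
noncomputable def Sflow (t : ℝ) (p : ℝ × ℝ) : ℝ × ℝ :=
  (p.1, max (p.2 - (if p.1 = 0 then 1 else p.1) * t) 0)

/-- `Sflow t` fails to have closed graph on `Z` for every `t > 0`: the points
`z_n = (1/(n+1), y₀)` converge to `(0,y₀)`, their images converge to `(0,y₀)`,
but `Sflow t (0,y₀) ≠ (0,y₀)`. -/
theorem Sflow_not_closed_graph :
    ∀ t : ℝ, 0 < t → ∀ y₀ : ℝ, 0 < y₀ →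
      (∀ n : ℕ, ((1 : ℝ) / (n + 1), y₀) ∈ Zset) ∧
      Tendsto (fun n : ℕ => (((1 : ℝ) / (n + 1), y₀) : ℝ × ℝ)) atTop (𝓝 (0, y₀)) ∧
      Tendsto (fun n : ℕ => Sflow t ((1 : ℝ) / (n + 1), y₀)) atTop (𝓝 (0, y₀)) ∧
      Sflow t (0, y₀) = (0, max (y₀ - t) 0) ∧
      Sflow t (0, y₀) ≠ (0, y₀) := by
  intro t ht y₀ hy₀
  have hlim : Tendsto (fun n : ℕ => (1 : ℝ) / (n + 1)) atTop (𝓝 0) :=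
    tendsto_one_div_add_atTop_nhds_zero_nat
  have hne : ∀ n : ℕ, ((1 : ℝ) / (n + 1)) ≠ 0 := by
    intro n
    positivity
  refine ⟨?_, ?_, ?_, ?_, ?_⟩
  · intro n
    constructor
    · constructor
      · positivity
      · rw [div_le_one (by positivity)]
        linarith [Nat.cast_nonneg (α := ℝ) n]
    · exact hy₀.le
  · exact hlim.prodMk_nhds tendsto_const_nhds
  · have h2 : Tendsto (fun n : ℕ => max (y₀ - (1 : ℝ) / (n + 1) * t) 0) atTop
        (𝓝 (max (y₀ - 0 * t) 0)) := by
      apply Tendsto.max _ tendsto_const_nhds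
      exact (tendsto_const_nhds.sub (hlim.mul_const t))
    simp only [zero_mul, sub_zero, max_eq_left hy₀.le] at h2
    have : (fun n : ℕ => Sflow t ((1 : ℝ) / (n + 1), y₀)) =
        fun n : ℕ => (((1 : ℝ) / (n + 1)), max (y₀ - (1 : ℝ) / (n + 1) * t) 0) := by
      funext n
      simp only [Sflow, hne n, if_neg (by positivity : ((n:ℝ)+1) ≠ 0)]
      norm_num
    rw [this]
    exact hlim.prodMk_nhds h2
  · simp [Sflow]
  · have hlt : max (y₀ - t) 0 < y₀ := max_lt (by linarith) hy₀
    simp only [Sflow, if_pos rfl, one_mul, Prod.mk.injEq, ne_eq, not_and]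
    intro _ h
    simp only [if_true, one_mul] at h
    rw [h] at hlt
    exact lt_irrefl _ hlt
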